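/- L'Hospital's rule for regulated functions (0/0 case): Let f, g be regulated on (a,b), α strictly increasing, with D_α f and D_α g existing everywhere on (a,b), D_α g of constant sign on (a,b), lim_{x↑b} (D_α f)(x)/(D_α g)(x) = A (with A ∈ [-∞,∞]), and lim_{x↑b} f^-(x) = lim_{x↑b} g^-(x) = 0. Then lim_{x↑b} f^-(x)/g^-(x) = A. -/

import Mathlib

open Filter Topology Function Set MeasureTheory

/-- `x` lies in the interval `(a, b)` with extended-real endpoints. -/
def MemI (a b : EReal) (x : ℝ) : Prop := a < (x : EReal) ∧ (x : EReal) < b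

/-- `f` is regulated on `(a, b)`: both one-sided limits exist (as real numbers)
at every point of `(a, b)`. -/
def RegulatedOn' (f : ℝ → ℝ) (a b : EReal) : Prop :=
  ∀ x : ℝ, MemI a b x →
    (∃ L : ℝ, Tendsto f (𝓝[<] x) (𝓝 L)) ∧ ∃ R : ℝ, Tendsto f (𝓝[>] x) (𝓝 R)

/-- The symmetric `α`-derivative of `f` at `x` equals `A`:
`(D_α f)(x) = lim_{h↓0} (f⁻(x+h) - f⁺(x-h)) / (α⁻(x+h) - α⁺(x-h))`. -/
def HasDerivAlpha (f α : ℝ → ℝ) (x A : ℝ) : Prop :=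
  Tendsto (fun h : ℝ =>
      (leftLim f (x + h) - rightLim f (x - h)) /
        (leftLim α (x + h) - rightLim α (x - h)))
    (𝓝[>] (0 : ℝ)) (𝓝 A)

/-- The filter of real numbers approaching `b : EReal` from the left (`x ↑ b`). -/
noncomputable def leftFilter (b : EReal) : Filter ℝ := comap (fun x : ℝ => (x : EReal)) (𝓝[<] b)

/-- The filter of real numbers approaching `a : EReal` from the right (`x ↓ a`). -/
noncomputable def rightFilter (a : EReal) : Filter ℝ := comap (fun x : ℝ => (x : EReal)) (𝓝[>] a)

namespace LHAux

variable {a b : EReal}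

lemma memI_of_mem {x y z : ℝ} (hx : MemI a b x) (hy : MemI a b y)
    (h1 : x ≤ z) (h2 : z ≤ y) : MemI a b z :=
  ⟨lt_of_lt_of_le hx.1 (by exact_mod_cast h1), lt_of_le_of_lt (by exact_mod_cast h2) hy.2⟩

lemma exists_real_btwn {u v : EReal} (h : u < v) : ∃ x : ℝ, u < (x:EReal) ∧ (x:EReal) < v :=
  EReal.lt_iff_exists_real_btwn.1 h

lemma eventually_memI_right {x : ℝ} (hx : MemI a b x) : ∀ᶠ z in 𝓝[>] x, MemI a b z := by
  obtain ⟨r, hr1, hr2⟩ := exists_real_btwn hx.2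
  have hxr : x < r := by exact_mod_cast hr1
  filter_upwards [Ioo_mem_nhdsGT hxr] with z hz
  exact ⟨hx.1.trans (by exact_mod_cast hz.1), lt_trans (by exact_mod_cast hz.2) hr2⟩

lemma eventually_memI_left {x : ℝ} (hx : MemI a b x) : ∀ᶠ z in 𝓝[<] x, MemI a b z := by
  obtain ⟨r, hr1, hr2⟩ := exists_real_btwn hx.1
  have hxr : r < x := by exact_mod_cast hr2
  filter_upwards [Ioo_mem_nhdsLT hxr] with z hz
  exact ⟨lt_trans hr1 (by exact_mod_cast hz.1), lt_of_le_of_lt (show (z:EReal) ≤ (x:EReal) by exact_mod_cast hz.2.le) hx.2⟩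

lemma tendsto_leftLim_self {u : ℝ → ℝ} (hu : RegulatedOn' u a b) {z : ℝ} (hz : MemI a b z) :
    Tendsto u (𝓝[<] z) (𝓝 (leftLim u z)) := by
  obtain ⟨L, hL⟩ := (hu z hz).1
  rwa [leftLim_eq_of_tendsto hL]

lemma tendsto_rightLim_self {u : ℝ → ℝ} (hu : RegulatedOn' u a b) {z : ℝ} (hz : MemI a b z) :
    Tendsto u (𝓝[>] z) (𝓝 (rightLim u z)) := by
  obtain ⟨R, hR⟩ := (hu z hz).2
  rwa [rightLim_eq_of_tendsto hR]

lemma tendsto_leftLim_of_right {u : ℝ → ℝ} {x R : ℝ}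
    (hR : Tendsto u (𝓝[>] x) (𝓝 R))
    (hex : ∀ᶠ z in 𝓝[>] x, Tendsto u (𝓝[<] z) (𝓝 (leftLim u z))) :
    Tendsto (leftLim u) (𝓝[>] x) (𝓝 R) := by
  rw [Metric.tendsto_nhdsWithin_nhds] at hR ⊢
  intro ε hε
  obtain ⟨δ₁, hδ₁, h1⟩ := hR (ε/2) (by linarith)
  obtain ⟨δ₂, hδ₂, h2⟩ := Metric.mem_nhdsWithin_iff.1 hex
  refine ⟨min δ₁ δ₂, lt_min hδ₁ hδ₂, ?_⟩
  intro z hz hdz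
  have hzx : x < z := hz
  have hzd : z - x < δ₁ := by
    rw [Real.dist_eq, abs_of_pos (sub_pos.2 hzx)] at hdz
    exact hdz.trans_le (min_le_left _ _)
  have hzt : Tendsto u (𝓝[<] z) (𝓝 (leftLim u z)) := by
    apply h2
    refine ⟨Metric.mem_ball.2 ?_, hz⟩
    exact hdz.trans_le (min_le_right _ _)
  have key : ∀ᶠ v in 𝓝[<] z, dist (u v) R ≤ ε/2 := by
    filter_upwards [Ioo_mem_nhdsLT hzx] with v hv
    refine (h1 hv.1 ?_).le
    rw [Real.dist_eq, abs_of_pos (sub_pos.2 hv.1)]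
    linarith [hv.2]
  have hle : dist (leftLim u z) R ≤ ε/2 :=
    le_of_tendsto (hzt.dist (tendsto_const_nhds (x := R))) key
  calc dist (leftLim u z) R ≤ ε/2 := hle
  _ < ε := by linarith

lemma tendsto_rightLim_of_left {u : ℝ → ℝ} {x L : ℝ}
    (hL : Tendsto u (𝓝[<] x) (𝓝 L))
    (hex : ∀ᶠ z in 𝓝[<] x, Tendsto u (𝓝[>] z) (𝓝 (rightLim u z))) :
    Tendsto (rightLim u) (𝓝[<] x) (𝓝 L) := by
  rw [Metric.tendsto_nhdsWithin_nhds] at hL ⊢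
  intro ε hε
  obtain ⟨δ₁, hδ₁, h1⟩ := hL (ε/2) (by linarith)
  obtain ⟨δ₂, hδ₂, h2⟩ := Metric.mem_nhdsWithin_iff.1 hex
  refine ⟨min δ₁ δ₂, lt_min hδ₁ hδ₂, ?_⟩
  intro z hz hdz
  have hzx : z < x := hz
  have hzd : x - z < δ₁ := by
    rw [Real.dist_eq, abs_of_neg (sub_neg.2 hzx)] at hdz
    have := hdz.trans_le (min_le_left _ _); linarith
  have hzt : Tendsto u (𝓝[>] z) (𝓝 (rightLim u z)) := by
    apply h2
    refine ⟨Metric.mem_ball.2 ?_, hz⟩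
    exact hdz.trans_le (min_le_right _ _)
  have key : ∀ᶠ v in 𝓝[>] z, dist (u v) L ≤ ε/2 := by
    filter_upwards [Ioo_mem_nhdsGT hzx] with v hv
    refine (h1 hv.2 ?_).le
    rw [Real.dist_eq, abs_of_neg (sub_neg.2 hv.2)]
    linarith [hv.1]
  have hle : dist (rightLim u z) L ≤ ε/2 :=
    le_of_tendsto (hzt.dist (tendsto_const_nhds (x := L))) key
  calc dist (rightLim u z) L ≤ ε/2 := hle
  _ < ε := by linarith

lemma tendsto_leftLim_of_left {u : ℝ → ℝ} {x L : ℝ}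
    (hL : Tendsto u (𝓝[<] x) (𝓝 L))
    (hex : ∀ᶠ z in 𝓝[<] x, Tendsto u (𝓝[<] z) (𝓝 (leftLim u z))) :
    Tendsto (leftLim u) (𝓝[<] x) (𝓝 L) := by
  rw [Metric.tendsto_nhdsWithin_nhds] at hL ⊢
  intro ε hε
  obtain ⟨δ₁, hδ₁, h1⟩ := hL (ε/2) (by linarith)
  obtain ⟨δ₂, hδ₂, h2⟩ := Metric.mem_nhdsWithin_iff.1 hex
  refine ⟨min δ₁ δ₂, lt_min hδ₁ hδ₂, ?_⟩
  intro z hz hdz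
  have hzx : z < x := hz
  have hzd : x - z < δ₁ := by
    rw [Real.dist_eq, abs_of_neg (sub_neg.2 hzx)] at hdz
    have := hdz.trans_le (min_le_left _ _); linarith
  have hzt : Tendsto u (𝓝[<] z) (𝓝 (leftLim u z)) := by
    apply h2
    refine ⟨Metric.mem_ball.2 ?_, hz⟩
    exact hdz.trans_le (min_le_right _ _)
  have key : ∀ᶠ v in 𝓝[<] z, dist (u v) L ≤ ε/2 := by
    have hxz : x - δ₁ < z := by linarith
    filter_upwards [Ioo_mem_nhdsLT hxz] with v hv
    refine (h1 (hv.2.trans hzx) ?_).le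
    rw [Real.dist_eq, abs_of_neg (sub_neg.2 (hv.2.trans hzx))]
    linarith [hv.1]
  have hle : dist (leftLim u z) L ≤ ε/2 :=
    le_of_tendsto (hzt.dist (tendsto_const_nhds (x := L))) key
  calc dist (leftLim u z) L ≤ ε/2 := hle
  _ < ε := by linarith

lemma tendsto_add_right (x : ℝ) : Tendsto (fun t : ℝ => x + t) (𝓝[>] (0:ℝ)) (𝓝[>] x) := by
  apply tendsto_nhdsWithin_of_tendsto_nhds_of_eventually_within
  · have h : Tendsto (fun t : ℝ => x + t) (𝓝 (0:ℝ)) (𝓝 (x + 0)) :=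
      (continuous_const.add continuous_id).tendsto 0
    rw [add_zero] at h
    exact h.mono_left nhdsWithin_le_nhds
  · filter_upwards [self_mem_nhdsWithin] with t ht
    exact lt_add_of_pos_right x ht

lemma tendsto_sub_right (x : ℝ) : Tendsto (fun t : ℝ => x - t) (𝓝[>] (0:ℝ)) (𝓝[<] x) := by
  apply tendsto_nhdsWithin_of_tendsto_nhds_of_eventually_within
  · have h : Tendsto (fun t : ℝ => x - t) (𝓝 (0:ℝ)) (𝓝 (x - 0)) :=
      (continuous_const.sub continuous_id).tendsto 0
    rw [sub_zero] at h
    exact h.mono_left nhdsWithin_le_nhds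
  · filter_upwards [self_mem_nhdsWithin] with t ht
    exact sub_lt_self x ht

lemma tendsto_leftLim_shift {u : ℝ → ℝ} (hu : RegulatedOn' u a b) {x : ℝ} (hx : MemI a b x) :
    Tendsto (fun t : ℝ => leftLim u (x + t)) (𝓝[>] (0:ℝ)) (𝓝 (rightLim u x)) :=
  (tendsto_leftLim_of_right (tendsto_rightLim_self hu hx)
    ((eventually_memI_right hx).mono fun _ hz => tendsto_leftLim_self hu hz)).comp
    (tendsto_add_right x)

lemma tendsto_rightLim_shift {u : ℝ → ℝ} (hu : RegulatedOn' u a b) {x : ℝ} (hx : MemI a b x) :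
    Tendsto (fun t : ℝ => rightLim u (x - t)) (𝓝[>] (0:ℝ)) (𝓝 (leftLim u x)) :=
  (tendsto_rightLim_of_left (tendsto_leftLim_self hu hx)
    ((eventually_memI_left hx).mono fun _ hz => tendsto_rightLim_self hu hz)).comp
    (tendsto_sub_right x)

lemma jump_nonneg {u : ℝ → ℝ} (hu : RegulatedOn' u a b)
    (hcross : ∀ x : ℝ, MemI a b x → ∀ᶠ t in 𝓝[>] (0:ℝ), rightLim u (x - t) ≤ leftLim u (x + t))
    {x : ℝ} (hx : MemI a b x) : leftLim u x ≤ rightLim u x :=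
  le_of_tendsto_of_tendsto (tendsto_rightLim_shift hu hx) (tendsto_leftLim_shift hu hx)
    (hcross x hx)

lemma key_mono {u : ℝ → ℝ} (hu : RegulatedOn' u a b)
    (hcross : ∀ x : ℝ, MemI a b x → ∀ᶠ t in 𝓝[>] (0:ℝ), rightLim u (x - t) ≤ leftLim u (x + t))
    {x y : ℝ} (hx : MemI a b x) (hy : MemI a b y) (hxy : x < y) :
    rightLim u x ≤ leftLim u y := by
  have jump : ∀ z : ℝ, MemI a b z → leftLim u z ≤ rightLim u z :=
    fun z hz => jump_nonneg hu hcross hz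
  -- it suffices to show `rightLim u x - ε ≤ leftLim u y` for every `ε > 0`
  refine le_of_forall_pos_le_add fun ε hε => ?_
  rw [← sub_le_iff_le_add]
  set c : ℝ := rightLim u x - ε with hc
  -- find δ₀ such that u is ε-close to rightLim u x on (x, x+δ₀), and x + δ₀ ≤ y
  obtain ⟨δ₀', hδ₀', hδ₀p⟩ := Metric.tendsto_nhdsWithin_nhds.1 (tendsto_rightLim_self hu hx) ε hε
  set δ₀ : ℝ := min δ₀' (y - x) with hδ₀def
  have hδ₀ : 0 < δ₀ := lt_min hδ₀' (by linarith)
  have hδ₀y : x + δ₀ ≤ y := by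
    have := min_le_right δ₀' (y - x); simp only [hδ₀def]; linarith
  have hmem : ∀ v : ℝ, x < v → v ≤ y → MemI a b v :=
    fun v h1 h2 => memI_of_mem hx hy h1.le h2
  -- the one-sided limits of u are ≥ c on (x, x + δ₀)
  have hP0 : ∀ v ∈ Ioo x (x + δ₀), c ≤ leftLim u v ∧ c ≤ rightLim u v := by
    intro v hv
    have hvS : MemI a b v := hmem v hv.1 (by linarith [hv.2])
    have hl : c ≤ leftLim u v := by
      refine ge_of_tendsto (tendsto_leftLim_self hu hvS) ?_
      filter_upwards [Ioo_mem_nhdsLT hv.1] with w hw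
      have hd : dist (u w) (rightLim u x) < ε := by
        refine hδ₀p hw.1 ?_
        rw [Real.dist_eq, abs_of_pos (sub_pos.2 hw.1)]
        have : w < x + δ₀ := hw.2.trans hv.2
        have := min_le_left δ₀' (y - x)
        linarith
      have := abs_lt.1 (by rwa [Real.dist_eq] at hd)
      simp only [hc]; linarith [this.1]
    exact ⟨hl, hl.trans (jump v hvS)⟩
  set x₀ : ℝ := x + δ₀ / 2 with hx₀def
  have hx₀P : c ≤ leftLim u x₀ ∧ c ≤ rightLim u x₀ :=
    hP0 x₀ ⟨by simp only [hx₀def]; linarith, by simp only [hx₀def]; linarith⟩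
  set T : Set ℝ := {w | w ∈ Icc x₀ y ∧ ∀ v ∈ Icc x₀ w, c ≤ leftLim u v ∧ c ≤ rightLim u v}
    with hTdef
  have hx₀y : x₀ ≤ y := by simp only [hx₀def]; linarith
  have hx₀T : x₀ ∈ T := by
    refine ⟨⟨le_refl _, hx₀y⟩, fun v hv => ?_⟩
    have : v = x₀ := le_antisymm hv.2 hv.1
    rwa [this]
  have hTbdd : BddAbove T := ⟨y, fun w hw => hw.1.2⟩
  set s : ℝ := sSup T with hsdef
  have hs1 : x₀ ≤ s := le_csSup hTbdd hx₀T
  have hs2 : s ≤ y := csSup_le ⟨x₀, hx₀T⟩ fun w hw => hw.1.2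
  have hxx₀ : x < x₀ := by simp only [hx₀def]; linarith
  have hsS : MemI a b s := hmem s (hxx₀.trans_le hs1) hs2
  have hPbelow : ∀ v, x₀ ≤ v → v < s → c ≤ leftLim u v ∧ c ≤ rightLim u v := by
    intro v hv1 hv2
    obtain ⟨w, hwT, hvw⟩ := exists_lt_of_lt_csSup ⟨x₀, hx₀T⟩ hv2
    exact hwT.2 v ⟨hv1, hvw.le⟩
  have hPs : c ≤ leftLim u s ∧ c ≤ rightLim u s := by
    have hls : c ≤ leftLim u s := by
      rcases eq_or_lt_of_le hs1 with heq | hlt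
      · rw [← heq]; exact hx₀P.1
      · have htd : Tendsto (leftLim u) (𝓝[<] s) (𝓝 (leftLim u s)) :=
          tendsto_leftLim_of_left (tendsto_leftLim_self hu hsS)
            ((eventually_memI_left hsS).mono fun _ hz => tendsto_leftLim_self hu hz)
        refine ge_of_tendsto htd ?_
        filter_upwards [Ioo_mem_nhdsLT hlt] with v hv
        exact (hPbelow v hv.1.le hv.2).1
    exact ⟨hls, hls.trans (jump s hsS)⟩
  have hsT : s ∈ T := by
    refine ⟨⟨hs1, hs2⟩, fun v hv => ?_⟩
    rcases lt_or_eq_of_le hv.2 with hlt | heq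
    · exact hPbelow v hv.1 hlt
    · rw [heq]; exact hPs
  have hsy : s = y := by
    by_contra hne
    have hsy' : s < y := lt_of_le_of_ne hs2 hne
    have hev : ∀ᶠ t in 𝓝[>] (0:ℝ),
        rightLim u (s - t) ≤ leftLim u (s + t) ∧ t < s - x ∧ t < y - s := by
      have h1 := hcross s hsS
      have h2 : ∀ᶠ t in 𝓝[>] (0:ℝ), t < s - x := by
        filter_upwards [Ioo_mem_nhdsGT
          (by linarith [hxx₀.trans_le hs1] : (0:ℝ) < s - x)] with t ht
        exact ht.2
      have h3 : ∀ᶠ t in 𝓝[>] (0:ℝ), t < y - s := by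
        filter_upwards [Ioo_mem_nhdsGT (by linarith : (0:ℝ) < y - s)] with t ht
        exact ht.2
      filter_upwards [h1, h2, h3] with t ht1 ht2 ht3 using ⟨ht1, ht2, ht3⟩
    obtain ⟨δ₁, hδ₁pos, hδ₁⟩ := mem_nhdsGT_iff_exists_Ioc_subset.1 hev
    have hδ₁pos' : (0:ℝ) < δ₁ := hδ₁pos
    have hnew : s + δ₁ ∈ T := by
      have hδ₁y : δ₁ < y - s := (hδ₁ ⟨hδ₁pos', le_refl _⟩).2.2
      refine ⟨⟨by linarith, by linarith⟩, fun v hv => ?_⟩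
      rcases le_or_gt v s with hvs | hvs
      · exact hsT.2 v ⟨hv.1, hvs⟩
      · set t : ℝ := v - s with htdef
        have htmem : t ∈ Ioc (0:ℝ) δ₁ := ⟨by simp only [htdef]; linarith,
          by simp only [htdef]; linarith [hv.2]⟩
        obtain ⟨hcr, hts, hty⟩ := hδ₁ htmem
        have hvrw : s + t = v := by simp only [htdef]; ring
        rw [hvrw] at hcr
        have hst : c ≤ rightLim u (s - t) := by
          rcases lt_or_ge (s - t) x₀ with hcase | hcase
          · refine (hP0 (s - t) ⟨by linarith, ?_⟩).2
            simp only [hx₀def] at hcase; simp only [hδ₀def] at hcase ⊢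
            linarith
          · exact (hsT.2 (s - t) ⟨hcase, by linarith⟩).2
        have hl : c ≤ leftLim u v := hst.trans hcr
        have hvS : MemI a b v := hmem v (hxx₀.trans_le hv.1) (by linarith [hv.2, hδ₁y])
        exact ⟨hl, hl.trans (jump v hvS)⟩
    have : s + δ₁ ≤ s := le_csSup hTbdd hnew
    linarith
  have := (hsT.2 y ⟨hx₀y, by rw [hsy]⟩).1
  simp only [hc] at this; linarith

lemma denom_pos {α' : ℝ → ℝ} (hα : StrictMonoOn α' {x : ℝ | MemI a b x})
    {x : ℝ} (hx : MemI a b x) :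
    ∀ᶠ t in 𝓝[>] (0:ℝ), rightLim α' (x - t) < leftLim α' (x + t) := by
  obtain ⟨p, hp1, hp2⟩ := exists_real_btwn hx.1
  obtain ⟨r, hr1, hr2⟩ := exists_real_btwn hx.2
  have hpx : p < x := by exact_mod_cast hp2
  have hxr : x < r := by exact_mod_cast hr1
  have hpS : MemI a b p := ⟨hp1, hp2.trans hx.2⟩
  have hrS : MemI a b r := ⟨hx.1.trans hr1, hr2⟩
  have hsub : Icc p r ⊆ {z : ℝ | MemI a b z} := fun z hz => memI_of_mem hpS hrS hz.1 hz.2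
  set β : ℝ → ℝ := fun v => α' (max p (min r v)) with hβdef
  have hclamp : ∀ v : ℝ, max p (min r v) ∈ Icc p r :=
    fun v => ⟨le_max_left _ _, max_le (hpx.le.trans hxr.le) (min_le_left r v)⟩
  have hβmono : Monotone β := by
    intro v w hvw
    exact hα.monotoneOn (hsub (hclamp v)) (hsub (hclamp w))
      (max_le_max le_rfl (min_le_min le_rfl hvw))
  have hβeq : ∀ z ∈ Icc p r, β z = α' z := by
    intro z hz
    simp only [hβdef, min_eq_right hz.2, max_eq_right hz.1]
  filter_upwards [Ioo_mem_nhdsGT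
    (lt_min (sub_pos.2 hpx) (sub_pos.2 hxr) : (0:ℝ) < min (x - p) (r - x))] with t ht
  obtain ⟨ht0, htm⟩ := ht
  have htp : t < x - p := htm.trans_le (min_le_left _ _)
  have htr : t < r - x := htm.trans_le (min_le_right _ _)
  -- identify one-sided limits of α' with those of β
  have hR : rightLim α' (x - t) = rightLim β (x - t) := by
    have h1 : Tendsto β (𝓝[>] (x - t)) (𝓝 (rightLim β (x - t))) := by
      have h2 := hβmono.tendsto_nhdsGT (x - t)
      rwa [← hβmono.rightLim_eq_sInf] at h2
    have hagree : α' =ᶠ[𝓝[>] (x - t)] β := by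
      filter_upwards [Ioo_mem_nhdsGT (show x - t < r by linarith)] with v hv
      exact (hβeq v ⟨by linarith [hv.1], hv.2.le⟩).symm
    exact rightLim_eq_of_tendsto
      (h1.congr' hagree.symm)
  have hL : leftLim α' (x + t) = leftLim β (x + t) := by
    have h1 : Tendsto β (𝓝[<] (x + t)) (𝓝 (leftLim β (x + t))) := by
      have h2 := hβmono.tendsto_nhdsLT (x + t)
      rwa [← hβmono.leftLim_eq_sSup] at h2
    have hagree : α' =ᶠ[𝓝[<] (x + t)] β := by
      filter_upwards [Ioo_mem_nhdsLT (show p < x + t by linarith)] with v hv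
      exact (hβeq v ⟨hv.1.le, by linarith [hv.2]⟩).symm
    exact leftLim_eq_of_tendsto
      (h1.congr' hagree.symm)
  rw [hR, hL]
  set m : ℝ := x + t / 2 with hmdef
  have hmS : MemI a b m := memI_of_mem hpS hrS (by simp only [hmdef]; linarith)
    (by simp only [hmdef]; linarith)
  calc rightLim β (x - t) ≤ β x := hβmono.rightLim_le (by linarith)
  _ = α' x := hβeq x ⟨hpx.le, hxr.le⟩
  _ < α' m := hα hx hmS (by simp only [hmdef]; linarith)
  _ = β m := (hβeq m ⟨by simp only [hmdef]; linarith, by simp only [hmdef]; linarith⟩).symm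
  _ ≤ leftLim β (x + t) := hβmono.le_leftLim (by simp only [hmdef]; linarith)

lemma eventually_memI_sym {z : ℝ} (hz : MemI a b z) :
    ∀ᶠ t in 𝓝[>] (0:ℝ), MemI a b (z - t) ∧ MemI a b (z + t) := by
  obtain ⟨p, hp1, hp2⟩ := exists_real_btwn hz.1
  obtain ⟨r, hr1, hr2⟩ := exists_real_btwn hz.2
  have hpz : p < z := by exact_mod_cast hp2
  have hzr : z < r := by exact_mod_cast hr1
  have hpS : MemI a b p := ⟨hp1, hp2.trans hz.2⟩
  have hrS : MemI a b r := ⟨hz.1.trans hr1, hr2⟩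
  filter_upwards [Ioo_mem_nhdsGT
    (lt_min (sub_pos.2 hpz) (sub_pos.2 hzr) : (0:ℝ) < min (z - p) (r - z))] with t ht
  have h0 : 0 < t := ht.1
  have h1 : t < z - p := ht.2.trans_le (min_le_left _ _)
  have h2 : t < r - z := ht.2.trans_le (min_le_right _ _)
  exact ⟨memI_of_mem hpS hrS (by linarith) (by linarith),
    memI_of_mem hpS hrS (by linarith) (by linarith)⟩

lemma regulated_combo {f g : ℝ → ℝ} (hf : RegulatedOn' f a b) (hg : RegulatedOn' g a b)
    (p q : ℝ) : RegulatedOn' (fun v => p * f v + q * g v) a b := by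
  intro x hx
  obtain ⟨⟨Lf, hLf⟩, ⟨Rf, hRf⟩⟩ := hf x hx
  obtain ⟨⟨Lg, hLg⟩, ⟨Rg, hRg⟩⟩ := hg x hx
  exact ⟨⟨p * Lf + q * Lg, (hLf.const_mul p).add (hLg.const_mul q)⟩,
    ⟨p * Rf + q * Rg, (hRf.const_mul p).add (hRg.const_mul q)⟩⟩

lemma leftLim_combo {f g : ℝ → ℝ} (hf : RegulatedOn' f a b) (hg : RegulatedOn' g a b)
    (p q : ℝ) {z : ℝ} (hz : MemI a b z) :
    leftLim (fun v => p * f v + q * g v) z = p * leftLim f z + q * leftLim g z :=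
  leftLim_eq_of_tendsto
    (((tendsto_leftLim_self hf hz).const_mul p).add ((tendsto_leftLim_self hg hz).const_mul q))

lemma rightLim_combo {f g : ℝ → ℝ} (hf : RegulatedOn' f a b) (hg : RegulatedOn' g a b)
    (p q : ℝ) {z : ℝ} (hz : MemI a b z) :
    rightLim (fun v => p * f v + q * g v) z = p * rightLim f z + q * rightLim g z :=
  rightLim_eq_of_tendsto
    (((tendsto_rightLim_self hf hz).const_mul p).add ((tendsto_rightLim_self hg hz).const_mul q))

lemma hasDeriv_combo {f g α' : ℝ → ℝ} (hf : RegulatedOn' f a b) (hg : RegulatedOn' g a b)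
    (p q : ℝ) {z Df' Dg' : ℝ} (hz : MemI a b z)
    (hDf : HasDerivAlpha f α' z Df') (hDg : HasDerivAlpha g α' z Dg') :
    HasDerivAlpha (fun v => p * f v + q * g v) α' z (p * Df' + q * Dg') := by
  have h := (hDf.const_mul p).add (hDg.const_mul q)
  apply h.congr'
  filter_upwards [eventually_memI_sym hz] with t ht
  rw [leftLim_combo hf hg p q ht.2, rightLim_combo hf hg p q ht.1]
  ring

lemma cross_of_pos {u α' : ℝ → ℝ} (hα : StrictMonoOn α' {x : ℝ | MemI a b x})
    {x D : ℝ} (hx : MemI a b x) (hD : HasDerivAlpha u α' x D) (hDpos : 0 < D) :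
    ∀ᶠ t in 𝓝[>] (0:ℝ), rightLim u (x - t) ≤ leftLim u (x + t) := by
  filter_upwards [denom_pos hα hx, hD.eventually_const_lt hDpos] with t hden hq
  have hden' : 0 < leftLim α' (x + t) - rightLim α' (x - t) := sub_pos.2 hden
  have hnum : 0 < leftLim u (x + t) - rightLim u (x - t) := by
    have h1 : 0 < ((leftLim u (x + t) - rightLim u (x - t)) /
        (leftLim α' (x + t) - rightLim α' (x - t))) * (leftLim α' (x + t) - rightLim α' (x - t)) :=
      mul_pos hq hden'
    rwa [div_mul_cancel₀] at h1
    exact hden'.ne'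
  linarith

lemma leftFilter_neBot (hab : a < b) : (leftFilter b).NeBot := by
  apply Filter.comap_neBot
  intro t ht
  obtain ⟨l, hl, hsub⟩ := (mem_nhdsLT_iff_exists_Ioo_subset' hab).1 ht
  obtain ⟨z, hz1, hz2⟩ := exists_real_btwn (mem_Iio.1 hl)
  exact ⟨z, hsub ⟨hz1, hz2⟩⟩

lemma eventually_leftFilter_of_forall {c : ℝ} (hc : (c : EReal) < b) {P : ℝ → Prop}
    (h : ∀ z : ℝ, c < z → (z : EReal) < b → P z) : ∀ᶠ z in leftFilter b, P z := by
  have hm : Ioo (c : EReal) b ∈ 𝓝[<] b := Ioo_mem_nhdsLT hc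
  refine Filter.eventually_of_mem (Filter.preimage_mem_comap hm) fun z hz => ?_
  exact h z (EReal.coe_lt_coe_iff.1 hz.1) hz.2

lemma eventually_memI_leftFilter (hab : a < b) : ∀ᶠ z in leftFilter b, MemI a b z := by
  obtain ⟨c, hc1, hc2⟩ := exists_real_btwn hab
  exact eventually_leftFilter_of_forall hc2 fun z hz1 hz2 =>
    ⟨hc1.trans (by exact_mod_cast hz1), hz2⟩

lemma exists_forall_of_eventually_leftFilter (hab : a < b) {P : ℝ → Prop}
    (h : ∀ᶠ z in leftFilter b, P z) :
    ∃ c : ℝ, a < (c : EReal) ∧ (c : EReal) < b ∧ ∀ z : ℝ, c < z → (z : EReal) < b → P z := by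
  obtain ⟨t, ht, hsub⟩ := Filter.mem_comap.1 h
  obtain ⟨l, hl, hsub'⟩ := (mem_nhdsLT_iff_exists_Ioo_subset' hab).1 ht
  obtain ⟨c, hc1, hc2⟩ := exists_real_btwn (sup_lt_iff.2 ⟨mem_Iio.1 hl, hab⟩ : l ⊔ a < b)
  refine ⟨c, lt_of_le_of_lt le_sup_right hc1, hc2, fun z hz1 hz2 => ?_⟩
  have hlc : l < (c : EReal) := lt_of_le_of_lt le_sup_left hc1
  have : (z : EReal) ∈ Ioo l b := ⟨hlc.trans (by exact_mod_cast hz1), hz2⟩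
  exact hsub (hsub' this)

lemma nonpos_of_mono (hab : a < b) {L : ℝ → ℝ}
    (hmono : ∀ x y : ℝ, MemI a b x → MemI a b y → x < y → L x ≤ L y)
    (h0 : Tendsto L (leftFilter b) (𝓝 0)) : ∀ x : ℝ, MemI a b x → L x ≤ 0 := by
  intro x hx
  by_contra hcon
  push_neg at hcon
  haveI := leftFilter_neBot hab
  have h1 : ∀ᶠ z in leftFilter b, x < z ∧ MemI a b z :=
    eventually_leftFilter_of_forall hx.2 fun z hz1 hz2 =>
      ⟨hz1, ⟨hx.1.trans (by exact_mod_cast hz1), hz2⟩⟩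
  have h2 : ∀ᶠ z in leftFilter b, L z < L x := h0.eventually_lt_const hcon
  obtain ⟨z, ⟨hz1, hz2⟩, hz3⟩ := (h1.and h2).exists
  exact absurd (hmono x z hx hz2 hz1) (not_le.2 hz3)

lemma gneg (hab : a < b) {g α' : ℝ → ℝ} {Dg : ℝ → ℝ}
    (hg : RegulatedOn' g a b) (hα : StrictMonoOn α' {x : ℝ | MemI a b x})
    (hDg : ∀ x : ℝ, MemI a b x → HasDerivAlpha g α' x (Dg x))
    (hsign : ∀ x : ℝ, MemI a b x → 0 < Dg x)
    (hg0 : Tendsto (leftLim g) (leftFilter b) (𝓝 0)) :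
    ∀ x : ℝ, MemI a b x → leftLim g x < 0 := by
  have hcross : ∀ x : ℝ, MemI a b x →
      ∀ᶠ t in 𝓝[>] (0:ℝ), rightLim g (x - t) ≤ leftLim g (x + t) :=
    fun x hx => cross_of_pos hα hx (hDg x hx) (hsign x hx)
  have hmono : ∀ x y : ℝ, MemI a b x → MemI a b y → x < y → leftLim g x ≤ leftLim g y :=
    fun x y hx hy hxy => (jump_nonneg hg hcross hx).trans (key_mono hg hcross hx hy hxy)
  have hnonpos : ∀ x : ℝ, MemI a b x → leftLim g x ≤ 0 := nonpos_of_mono hab hmono hg0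
  intro x hx
  rcases (hnonpos x hx).lt_or_eq with h | heq
  · exact h
  exfalso
  have hall : ∀ w : ℝ, MemI a b w → x < w → leftLim g w = 0 ∧ rightLim g w = 0 := by
    intro w hw hxw
    have h1 : leftLim g w ≤ 0 := hnonpos w hw
    have h2 : 0 ≤ leftLim g w := by
      have := hmono x w hx hw hxw; rw [heq] at this; exact this
    have hL : leftLim g w = 0 := le_antisymm h1 h2
    obtain ⟨r', hr'1, hr'2⟩ := exists_real_btwn hw.2
    have hwr' : w < r' := by exact_mod_cast hr'1
    have hr'S : MemI a b r' := ⟨hw.1.trans hr'1, hr'2⟩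
    have h3 : rightLim g w ≤ leftLim g r' := key_mono hg hcross hw hr'S hwr'
    have h4 : leftLim g r' ≤ 0 := hnonpos r' hr'S
    refine ⟨hL, le_antisymm (h3.trans h4) ?_⟩
    rw [← hL]; exact jump_nonneg hg hcross hw
  obtain ⟨z, hz1, hz2⟩ := exists_real_btwn hx.2
  have hxz : x < z := by exact_mod_cast hz1
  have hzS : MemI a b z := ⟨hx.1.trans hz1, hz2⟩
  have hquot : ∀ᶠ t in 𝓝[>] (0:ℝ),
      (leftLim g (z + t) - rightLim g (z - t)) /
        (leftLim α' (z + t) - rightLim α' (z - t)) = 0 := by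
    filter_upwards [eventually_memI_sym hzS,
      Ioo_mem_nhdsGT (sub_pos.2 hxz : (0:ℝ) < z - x)] with t ht ht2
    have e1 := (hall (z + t) ht.2 (by linarith [ht2.1])).1
    have e2 := (hall (z - t) ht.1 (by linarith [ht2.2])).2
    rw [e1, e2]
    simp
  have hDz : Dg z = 0 :=
    tendsto_nhds_unique (hDg z hzS) ((tendsto_congr' hquot).2 tendsto_const_nhds)
  exact absurd (hsign z hzS) (by rw [hDz]; exact lt_irrefl 0)

lemma main_pos (hab : a < b) (f g α : ℝ → ℝ) (Df Dg : ℝ → ℝ) (A : EReal)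
    (hf : RegulatedOn' f a b) (hg : RegulatedOn' g a b)
    (hα : StrictMonoOn α {x : ℝ | MemI a b x})
    (hDf : ∀ x : ℝ, MemI a b x → HasDerivAlpha f α x (Df x))
    (hDg : ∀ x : ℝ, MemI a b x → HasDerivAlpha g α x (Dg x))
    (hsign : ∀ x : ℝ, MemI a b x → 0 < Dg x)
    (hratio : Tendsto (fun x : ℝ => ((Df x / Dg x : ℝ) : EReal)) (leftFilter b) (𝓝 A))
    (hf0 : Tendsto (leftLim f) (leftFilter b) (𝓝 0))
    (hg0 : Tendsto (leftLim g) (leftFilter b) (𝓝 0)) :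
    Tendsto (fun x : ℝ => ((leftLim f x / leftLim g x : ℝ) : EReal))
      (leftFilter b) (𝓝 A) := by
  have hgneg := gneg hab hg hα hDg hsign hg0
  rw [tendsto_order]
  constructor
  · intro p' hp'
    obtain ⟨p, hpp', hpA⟩ := exists_real_btwn hp'
    obtain ⟨p₂, hpp₂, hp₂A⟩ := exists_real_btwn hpA
    have hev : ∀ᶠ z in leftFilter b, (p₂ : ℝ) < Df z / Dg z := by
      filter_upwards [hratio.eventually_const_lt hp₂A] with z hz
      exact_mod_cast hz
    obtain ⟨c, hc1, hc2, hc3⟩ := exists_forall_of_eventually_leftFilter hab hev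
    set u : ℝ → ℝ := fun v => 1 * f v + (-p₂) * g v with hudef
    have himp : ∀ z : ℝ, MemI (c : EReal) b z → MemI a b z := fun z hz => ⟨hc1.trans hz.1, hz.2⟩
    have hf' : RegulatedOn' f (c : EReal) b := fun z hz => hf z (himp z hz)
    have hg' : RegulatedOn' g (c : EReal) b := fun z hz => hg z (himp z hz)
    have hu' : RegulatedOn' u (c : EReal) b := regulated_combo hf' hg' 1 (-p₂)
    have hα' : StrictMonoOn α {x : ℝ | MemI (c : EReal) b x} := fun z hz w hw hzw =>
      hα (himp z hz) (himp w hw) hzw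
    have hcross : ∀ z : ℝ, MemI (c : EReal) b z →
        ∀ᶠ t in 𝓝[>] (0:ℝ), rightLim u (z - t) ≤ leftLim u (z + t) := by
      intro z hz
      have hzS := himp z hz
      have hder : HasDerivAlpha u α z (1 * Df z + (-p₂) * Dg z) :=
        hasDeriv_combo hf hg 1 (-p₂) hzS (hDf z hzS) (hDg z hzS)
      refine cross_of_pos hα' hz hder ?_
      have h1 : (p₂ : ℝ) < Df z / Dg z := hc3 z (EReal.coe_lt_coe_iff.1 hz.1) hz.2
      have h2 := hsign z hzS
      have h3 := (lt_div_iff₀ h2).1 h1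
      linarith
    have hmono : ∀ x y : ℝ, MemI (c : EReal) b x → MemI (c : EReal) b y → x < y →
        leftLim u x ≤ leftLim u y :=
      fun x y hx hy hxy => (jump_nonneg hu' hcross hx).trans (key_mono hu' hcross hx hy hxy)
    have hu0 : Tendsto (leftLim u) (leftFilter b) (𝓝 0) := by
      have h2 : Tendsto (fun z => 1 * leftLim f z + (-p₂) * leftLim g z) (leftFilter b)
          (𝓝 (1 * 0 + (-p₂) * 0)) := (hf0.const_mul 1).add (hg0.const_mul (-p₂))
      rw [show (1 : ℝ) * 0 + (-p₂) * 0 = 0 by ring] at h2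
      apply h2.congr'
      filter_upwards [eventually_memI_leftFilter hab] with z hz
      exact (leftLim_combo hf hg 1 (-p₂) hz).symm
    have hnonpos := nonpos_of_mono hc2 hmono hu0
    refine eventually_leftFilter_of_forall hc2 fun z hz1 hz2 => ?_
    have hzc : MemI (c : EReal) b z := ⟨by exact_mod_cast hz1, hz2⟩
    have h1 : leftLim u z ≤ 0 := hnonpos z hzc
    have h2 : leftLim u z = leftLim f z - p₂ * leftLim g z := by
      rw [hudef]; rw [leftLim_combo hf hg 1 (-p₂) (himp z hzc)]; ring
    have h3 : leftLim g z < 0 := hgneg z (himp z hzc)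
    have h4 : (p₂ : ℝ) ≤ leftLim f z / leftLim g z := by
      rw [le_div_iff_of_neg h3]; rw [h2] at h1; linarith
    calc p' < (p : EReal) := hpp'
    _ < ((leftLim f z / leftLim g z : ℝ) : EReal) := by
        have hpq : p < leftLim f z / leftLim g z :=
          lt_of_lt_of_le (show p < p₂ by exact_mod_cast hpp₂) h4
        exact_mod_cast hpq
  · intro q' hq'
    obtain ⟨q, hqA, hqq'⟩ := exists_real_btwn hq'
    obtain ⟨q₂, hq₂A, hq₂q⟩ := exists_real_btwn hqA
    have hev : ∀ᶠ z in leftFilter b, Df z / Dg z < (q₂ : ℝ) := by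
      filter_upwards [hratio.eventually_lt_const hq₂A] with z hz
      exact_mod_cast hz
    obtain ⟨c, hc1, hc2, hc3⟩ := exists_forall_of_eventually_leftFilter hab hev
    set u : ℝ → ℝ := fun v => (-1) * f v + q₂ * g v with hudef
    have himp : ∀ z : ℝ, MemI (c : EReal) b z → MemI a b z := fun z hz => ⟨hc1.trans hz.1, hz.2⟩
    have hf' : RegulatedOn' f (c : EReal) b := fun z hz => hf z (himp z hz)
    have hg' : RegulatedOn' g (c : EReal) b := fun z hz => hg z (himp z hz)
    have hu' : RegulatedOn' u (c : EReal) b := regulated_combo hf' hg' (-1) q₂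
    have hα' : StrictMonoOn α {x : ℝ | MemI (c : EReal) b x} := fun z hz w hw hzw =>
      hα (himp z hz) (himp w hw) hzw
    have hcross : ∀ z : ℝ, MemI (c : EReal) b z →
        ∀ᶠ t in 𝓝[>] (0:ℝ), rightLim u (z - t) ≤ leftLim u (z + t) := by
      intro z hz
      have hzS := himp z hz
      have hder : HasDerivAlpha u α z ((-1) * Df z + q₂ * Dg z) :=
        hasDeriv_combo hf hg (-1) q₂ hzS (hDf z hzS) (hDg z hzS)
      refine cross_of_pos hα' hz hder ?_
      have h1 : Df z / Dg z < (q₂ : ℝ) := hc3 z (EReal.coe_lt_coe_iff.1 hz.1) hz.2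
      have h2 := hsign z hzS
      have h3 := (div_lt_iff₀ h2).1 h1
      linarith
    have hmono : ∀ x y : ℝ, MemI (c : EReal) b x → MemI (c : EReal) b y → x < y →
        leftLim u x ≤ leftLim u y :=
      fun x y hx hy hxy => (jump_nonneg hu' hcross hx).trans (key_mono hu' hcross hx hy hxy)
    have hu0 : Tendsto (leftLim u) (leftFilter b) (𝓝 0) := by
      have h2 : Tendsto (fun z => (-1) * leftLim f z + q₂ * leftLim g z) (leftFilter b)
          (𝓝 ((-1) * 0 + q₂ * 0)) := (hf0.const_mul (-1)).add (hg0.const_mul q₂)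
      rw [show (-1 : ℝ) * 0 + q₂ * 0 = 0 by ring] at h2
      apply h2.congr'
      filter_upwards [eventually_memI_leftFilter hab] with z hz
      exact (leftLim_combo hf hg (-1) q₂ hz).symm
    have hnonpos := nonpos_of_mono hc2 hmono hu0
    refine eventually_leftFilter_of_forall hc2 fun z hz1 hz2 => ?_
    have hzc : MemI (c : EReal) b z := ⟨by exact_mod_cast hz1, hz2⟩
    have h1 : leftLim u z ≤ 0 := hnonpos z hzc
    have h2 : leftLim u z = q₂ * leftLim g z - leftLim f z := by
      rw [hudef]; rw [leftLim_combo hf hg (-1) q₂ (himp z hzc)]; ring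
    have h3 : leftLim g z < 0 := hgneg z (himp z hzc)
    have h4 : leftLim f z / leftLim g z ≤ (q₂ : ℝ) := by
      rw [div_le_iff_of_neg h3]; rw [h2] at h1; linarith
    calc ((leftLim f z / leftLim g z : ℝ) : EReal) ≤ (q₂ : EReal) := by exact_mod_cast h4
    _ < (q : EReal) := hq₂q
    _ < q' := hqq'

lemma leftLim_neg {g : ℝ → ℝ} (hg : RegulatedOn' g a b) {z : ℝ} (hz : MemI a b z) :
    leftLim (fun v => -g v) z = -leftLim g z :=
  leftLim_eq_of_tendsto
    (tendsto_leftLim_self hg hz).neg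

lemma rightLim_neg {g : ℝ → ℝ} (hg : RegulatedOn' g a b) {z : ℝ} (hz : MemI a b z) :
    rightLim (fun v => -g v) z = -rightLim g z :=
  rightLim_eq_of_tendsto
    (tendsto_rightLim_self hg hz).neg

end LHAux


/-- L'Hospital's rule for regulated functions, `0/0` case. -/
theorem stmt15 (a b : EReal) (hab : a < b) (f g α : ℝ → ℝ) (Df Dg : ℝ → ℝ) (A : EReal)
    (hf : RegulatedOn' f a b) (hg : RegulatedOn' g a b)
    (hα : StrictMonoOn α {x : ℝ | MemI a b x})
    (hDf : ∀ x : ℝ, MemI a b x → HasDerivAlpha f α x (Df x))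
    (hDg : ∀ x : ℝ, MemI a b x → HasDerivAlpha g α x (Dg x))
    (hsign : (∀ x : ℝ, MemI a b x → 0 < Dg x) ∨ (∀ x : ℝ, MemI a b x → Dg x < 0))
    (hratio : Tendsto (fun x : ℝ => ((Df x / Dg x : ℝ) : EReal)) (leftFilter b) (𝓝 A))
    (hf0 : Tendsto (leftLim f) (leftFilter b) (𝓝 0))
    (hg0 : Tendsto (leftLim g) (leftFilter b) (𝓝 0)) :
    Tendsto (fun x : ℝ => ((leftLim f x / leftLim g x : ℝ) : EReal))
      (leftFilter b) (𝓝 A) := by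
  rcases hsign with hpos | hneg
  · exact LHAux.main_pos hab f g α Df Dg A hf hg hα hDf hDg hpos hratio hf0 hg0
  · set g' : ℝ → ℝ := fun v => -g v with hg'def
    have hg' : RegulatedOn' g' a b := by
      intro x hx
      obtain ⟨⟨L, hL⟩, ⟨R, hR⟩⟩ := hg x hx
      exact ⟨⟨-L, hL.neg⟩, ⟨-R, hR.neg⟩⟩
    have hDg' : ∀ x : ℝ, MemI a b x → HasDerivAlpha g' α x (-Dg x) := by
      intro x hx
      have h := (hDg x hx).neg
      apply h.congr'
      filter_upwards [LHAux.eventually_memI_sym hx] with t ht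
      rw [LHAux.leftLim_neg hg ht.2, LHAux.rightLim_neg hg ht.1]
      ring
    have hsign' : ∀ x : ℝ, MemI a b x → 0 < -Dg x := fun x hx => neg_pos.2 (hneg x hx)
    have hratio' : Tendsto (fun z : ℝ => ((Df z / -Dg z : ℝ) : EReal)) (leftFilter b)
        (𝓝 (-A)) := by
      refine (hratio.neg).congr fun z => ?_
      rw [div_neg, EReal.coe_neg]
    have hg0' : Tendsto (leftLim g') (leftFilter b) (𝓝 0) := by
      have h := hg0.neg
      rw [neg_zero] at h
      apply h.congr'
      filter_upwards [LHAux.eventually_memI_leftFilter hab] with z hz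
      exact (LHAux.leftLim_neg hg hz).symm
    have H := LHAux.main_pos hab f g' α Df (fun z => -Dg z) (-A) hf hg' hα hDf hDg'
      hsign' hratio' hf0 hg0'
    have H2 := H.neg
    rw [neg_neg] at H2
    apply H2.congr'
    filter_upwards [LHAux.eventually_memI_leftFilter hab] with z hz
    rw [LHAux.leftLim_neg hg hz, div_neg, EReal.coe_neg, neg_neg]
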